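/- Let d ≥ 2 and let R be a symmetric positive definite d×d real matrix. Then R ∈ M_d if and only if ((tr R)/(d−1))·Id − R is positive definite. -/

import Mathlib

/-- The set `𝕄_d = {Id − b⊗b : |b| = 1}` of symmetric matrices. -/
def MdBase (d : ℕ) : Set (Matrix (Fin d) (Fin d) ℝ) :=
  {M | ∃ b : Fin d → ℝ, (∑ i, (b i) ^ 2 = 1) ∧ M = 1 - Matrix.vecMulVec b b}

/-- The conic hull `𝕄_d^{conic}`: all finite sums `Σ αᵢ (Id − bᵢ⊗bᵢ)` with `αᵢ > 0`,
`|bᵢ| = 1`. -/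
def MdConic (d : ℕ) : Set (Matrix (Fin d) (Fin d) ℝ) :=
  {M | ∃ (m : ℕ) (α : Fin m → ℝ) (b : Fin m → Fin d → ℝ),
    (∀ i, 0 < α i) ∧ (∀ i, ∑ j, (b i j) ^ 2 = 1) ∧
    M = ∑ i, α i • (1 - Matrix.vecMulVec (b i) (b i))}

/-- `M_d`: the interior of `𝕄_d^{conic}` taken in the subspace `S^{d×d}` of symmetric
matrices (a matrix `R` is in the relative interior iff it is symmetric and there is an
open set `U ∋ R` of the matrix space such that every symmetric member of `U` lies in the
conic hull). -/
def Md (d : ℕ) : Set (Matrix (Fin d) (Fin d) ℝ) :=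
  {R | R.IsSymm ∧ ∃ U : Set (Matrix (Fin d) (Fin d) ℝ),
    IsOpen U ∧ R ∈ U ∧ ∀ S ∈ U, S.IsSymm → S ∈ MdConic d}

open Matrix

attribute [local instance] Matrix.normedAddCommGroup Matrix.normedSpace

namespace MdAux

variable {d : ℕ}

lemma quad_vecMulVec (b x : Fin d → ℝ) :
    x ⬝ᵥ (Matrix.vecMulVec b b) *ᵥ x = (b ⬝ᵥ x) ^ 2 := by
  simp only [dotProduct, mulVec, vecMulVec_apply, Finset.mul_sum, pow_two]
  rw [Finset.sum_comm]
  simp_rw [Finset.sum_mul]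
  apply Finset.sum_congr rfl; intro i _
  apply Finset.sum_congr rfl; intro j _
  ring

lemma quad_smul_one (c : ℝ) (x : Fin d → ℝ) :
    x ⬝ᵥ (c • (1 : Matrix (Fin d) (Fin d) ℝ)) *ᵥ x = c * (x ⬝ᵥ x) := by
  rw [smul_mulVec, one_mulVec, dotProduct_smul, smul_eq_mul]

lemma trace_vecMulVec (b : Fin d → ℝ) :
    (Matrix.vecMulVec b b).trace = ∑ j, (b j) ^ 2 := by
  simp [Matrix.trace, Matrix.diag, vecMulVec_apply, pow_two]

/-- The linear map `M ↦ (tr M/(d−1))·1 − M`. -/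
noncomputable def Qm (d : ℕ) (M : Matrix (Fin d) (Fin d) ℝ) : Matrix (Fin d) (Fin d) ℝ :=
  (M.trace / ((d : ℝ) - 1)) • (1 : Matrix (Fin d) (Fin d) ℝ) - M

lemma hd1 (hd : 2 ≤ d) : (0:ℝ) < (d:ℝ) - 1 := by
  have : (2:ℝ) ≤ (d:ℝ) := by exact_mod_cast hd
  linarith

lemma sum_mulVec' {m : ℕ} (A : Fin m → Matrix (Fin d) (Fin d) ℝ) (x : Fin d → ℝ) :
    (∑ i, A i) *ᵥ x = ∑ i, (A i) *ᵥ x := by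
  ext j
  simp only [mulVec, dotProduct, Finset.sum_apply, Matrix.sum_apply, Finset.sum_mul]
  exact Finset.sum_comm

lemma dotProduct_sum' {m : ℕ} (x : Fin d → ℝ) (v : Fin m → Fin d → ℝ) :
    x ⬝ᵥ (∑ i, v i) = ∑ i, x ⬝ᵥ v i := by
  simp only [dotProduct, Finset.sum_apply, Finset.mul_sum]
  exact Finset.sum_comm

lemma conic_Qm (hd : 2 ≤ d) {M : Matrix (Fin d) (Fin d) ℝ}
    (hM : M ∈ MdConic d) : ∀ x : Fin d → ℝ, 0 ≤ x ⬝ᵥ (Qm d M) *ᵥ x := by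
  obtain ⟨m, α, b, hα, hb, rfl⟩ := hM
  have htr : (∑ i, α i • (1 - Matrix.vecMulVec (b i) (b i))).trace
      = (∑ i, α i) * ((d:ℝ) - 1) := by
    rw [Matrix.trace_sum, Finset.sum_mul]
    apply Finset.sum_congr rfl
    intro i _
    rw [Matrix.trace_smul, Matrix.trace_sub, Matrix.trace_one, trace_vecMulVec, hb i]
    simp [smul_eq_mul]
  have hQ : Qm d (∑ i, α i • (1 - Matrix.vecMulVec (b i) (b i)))
      = ∑ i, α i • Matrix.vecMulVec (b i) (b i) := by
    rw [Qm, htr, mul_div_assoc, div_self (ne_of_gt (hd1 hd)), mul_one,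
      Finset.sum_smul, ← Finset.sum_sub_distrib]
    apply Finset.sum_congr rfl
    intro i _
    rw [← smul_sub, sub_sub_cancel]
  intro x
  rw [hQ]
  rw [sum_mulVec', dotProduct_sum']
  apply Finset.sum_nonneg
  intro i _
  rw [smul_mulVec, dotProduct_smul, smul_eq_mul, quad_vecMulVec]
  exact mul_nonneg (hα i).le (sq_nonneg _)

lemma trace_Qm (hd : 2 ≤ d) (S : Matrix (Fin d) (Fin d) ℝ) :
    (Qm d S).trace = S.trace / ((d:ℝ) - 1) := by
  rw [Qm, Matrix.trace_sub, Matrix.trace_smul, Matrix.trace_one, smul_eq_mul]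
  have h := (hd1 hd).ne'
  rw [Fintype.card_fin]
  field_simp
  ring

lemma Qm_psd_to_conic (hd : 2 ≤ d) {S : Matrix (Fin d) (Fin d) ℝ}
    (hpsd : (Qm d S).PosSemidef) : S ∈ MdConic d := by
  classical
  obtain ⟨B, hB⟩ : ∃ B : Matrix (Fin d) (Fin d) ℝ, Qm d S = Bᴴ * B := by
    open scoped MatrixOrder Matrix.Norms.L2Operator in
    exact CStarAlgebra.nonneg_iff_eq_star_mul_self.mp hpsd.nonneg
  rw [Matrix.conjTranspose_eq_transpose_of_trivial] at hB
  set n : Fin d → ℝ := fun i => ∑ j, (B i j) ^ 2 with hn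
  have hnn : ∀ i, 0 ≤ n i := fun i => Finset.sum_nonneg fun j _ => sq_nonneg _
  have hPdecomp : Qm d S = ∑ i, Matrix.vecMulVec (B i) (B i) := by
    rw [hB]; ext j l
    simp only [Matrix.mul_apply, Matrix.sum_apply, Matrix.vecMulVec_apply,
      Matrix.transpose_apply]
  have htrP : (Qm d S).trace = ∑ i, n i := by
    rw [hPdecomp, Matrix.trace_sum]
    exact Finset.sum_congr rfl fun i _ => trace_vecMulVec (B i)
  set T : Finset (Fin d) := Finset.univ.filter (fun i => n i ≠ 0) with hT
  set e : Fin T.card ≃ T := T.equivFin.symm with he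
  refine ⟨T.card, fun k => n (e k), fun k j => B (e k) j / Real.sqrt (n (e k)), ?_, ?_, ?_⟩
  · intro k
    have : n (e k) ≠ 0 := (Finset.mem_filter.mp (e k).2).2
    exact lt_of_le_of_ne (hnn _) (Ne.symm this)
  · intro k
    have h0 : n (e k) ≠ 0 := (Finset.mem_filter.mp (e k).2).2
    simp_rw [div_pow, ← Finset.sum_div, Real.sq_sqrt (hnn (e k))]
    exact div_self h0
  · have hterm : ∀ k : Fin T.card,
        (n (e k)) • ((1 : Matrix (Fin d) (Fin d) ℝ) -
          Matrix.vecMulVec (fun j => B (e k) j / Real.sqrt (n (e k)))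
            (fun j => B (e k) j / Real.sqrt (n (e k))))
        = (n (e k)) • (1 : Matrix (Fin d) (Fin d) ℝ)
            - Matrix.vecMulVec (B (e k)) (B (e k)) := by
      intro k
      set i : Fin d := (e k : Fin d) with hi
      have h0 : n i ≠ 0 := (Finset.mem_filter.mp (e k).2).2
      have hsq : Real.sqrt (n i) * Real.sqrt (n i) = n i := Real.mul_self_sqrt (hnn i)
      ext j l
      have key : n i * (B i j / Real.sqrt (n i) * (B i l / Real.sqrt (n i)))
          = B i j * B i l := by
        rw [div_mul_div_comm, hsq, mul_div_cancel₀ _ h0]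
      by_cases h : j = l
      · subst h
        simp [Matrix.vecMulVec_apply, Matrix.one_apply, mul_sub, key]
      · simp [h, Matrix.vecMulVec_apply, Matrix.one_apply, mul_sub, key]
    symm
    calc (∑ k, (n (e k)) • ((1 : Matrix (Fin d) (Fin d) ℝ) -
          Matrix.vecMulVec (fun j => B (e k) j / Real.sqrt (n (e k)))
            (fun j => B (e k) j / Real.sqrt (n (e k)))))
        = ∑ k, ((n (e k)) • (1 : Matrix (Fin d) (Fin d) ℝ)
            - Matrix.vecMulVec (B (e k)) (B (e k))) :=
          Finset.sum_congr rfl fun k _ => hterm k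
      _ = ∑ i ∈ T, ((n i) • (1 : Matrix (Fin d) (Fin d) ℝ)
            - Matrix.vecMulVec (B i) (B i)) := by
          rw [← Finset.sum_coe_sort T
            (fun i => (n i) • (1 : Matrix (Fin d) (Fin d) ℝ)
              - Matrix.vecMulVec (B i) (B i))]
          exact (Fintype.sum_equiv e _ _ (fun k => rfl))
      _ = ∑ i, ((n i) • (1 : Matrix (Fin d) (Fin d) ℝ)
            - Matrix.vecMulVec (B i) (B i)) := by
          apply Finset.sum_subset (Finset.subset_univ T)
          intro i _ hi
          have h0 : n i = 0 := by
            by_contra h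
            exact hi (Finset.mem_filter.mpr ⟨Finset.mem_univ i, h⟩)
          have hBz : ∀ j, B i j = 0 := by
            intro j
            have := (Finset.sum_eq_zero_iff_of_nonneg
              (fun j _ => sq_nonneg (B i j))).mp h0 j (Finset.mem_univ j)
            exact pow_eq_zero_iff (n := 2) (by norm_num) |>.mp this
          have : Matrix.vecMulVec (B i) (B i) = 0 := by
            ext j l; simp [Matrix.vecMulVec_apply, hBz]
          rw [h0, this]; simp
      _ = (∑ i, n i) • (1 : Matrix (Fin d) (Fin d) ℝ)
            - ∑ i, Matrix.vecMulVec (B i) (B i) := by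
          rw [Finset.sum_sub_distrib, Finset.sum_smul]
      _ = (S.trace / ((d:ℝ) - 1)) • (1 : Matrix (Fin d) (Fin d) ℝ) - Qm d S := by
          rw [← htrP, ← hPdecomp, trace_Qm hd]
      _ = S := sub_sub_cancel _ _

/-- Quadratic-form lower bound for a positive definite matrix. -/
lemma posdef_quad_lower (hd : 1 ≤ d) {A : Matrix (Fin d) (Fin d) ℝ} (hA : A.PosDef) :
    ∃ c > 0, ∀ x : Fin d → ℝ, c * ‖x‖ ^ 2 ≤ x ⬝ᵥ A *ᵥ x := by
  have : Nonempty (Fin d) := ⟨⟨0, hd⟩⟩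
  set f : (Fin d → ℝ) → ℝ := fun x => x ⬝ᵥ A *ᵥ x with hf
  have hcont : Continuous f := by
    show Continuous fun x : Fin d → ℝ => ∑ i, x i * ∑ j, A i j * x j
    apply continuous_finset_sum
    intro i _
    exact (continuous_apply i).mul
      (continuous_finset_sum _ fun j _ => continuous_const.mul (continuous_apply j))
  have hsph : IsCompact (Metric.sphere (0 : Fin d → ℝ) 1) := isCompact_sphere _ _
  have hne : (Metric.sphere (0 : Fin d → ℝ) 1).Nonempty := by
    refine ⟨fun _ => 1, ?_⟩
    simp [Metric.mem_sphere, dist_eq_norm]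
  obtain ⟨u, hu, hmin⟩ := hsph.exists_isMinOn hne hcont.continuousOn
  have hu1 : ‖u‖ = 1 := by simpa [dist_eq_norm] using hu
  have hu0 : u ≠ 0 := by intro h; rw [h] at hu1; simp at hu1
  have hc : 0 < f u := by simpa [star_trivial] using hA.dotProduct_mulVec_pos hu0
  refine ⟨f u, hc, fun x => ?_⟩
  rcases eq_or_ne x 0 with rfl | hx
  · simp [hf]
  · have hxn : 0 < ‖x‖ := norm_pos_iff.mpr hx
    set v : Fin d → ℝ := ‖x‖⁻¹ • x with hv
    have hvs : v ∈ Metric.sphere (0 : Fin d → ℝ) 1 := by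
      simp [hv, Metric.mem_sphere, dist_eq_norm, norm_smul, abs_of_pos (inv_pos.mpr hxn),
        inv_mul_cancel₀ hxn.ne']
    have hxv : x = ‖x‖ • v := by
      rw [hv, smul_smul, mul_inv_cancel₀ hxn.ne', one_smul]
    have hfx : f x = ‖x‖ ^ 2 * f v := by
      rw [hf]
      conv_lhs => rw [hxv]
      simp only [smul_dotProduct, mulVec_smul, dotProduct_smul, smul_eq_mul]
      ring
    have hle : f u ≤ f v := hmin hvs
    calc f u * ‖x‖ ^ 2 ≤ f v * ‖x‖ ^ 2 := mul_le_mul_of_nonneg_right hle (sq_nonneg _)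
      _ = f x := by rw [hfx]; ring

/-- Entrywise sup-norm bound on the quadratic form. -/
lemma quad_abs_le (N : Matrix (Fin d) (Fin d) ℝ) (x : Fin d → ℝ) :
    |x ⬝ᵥ N *ᵥ x| ≤ (d:ℝ)^2 * ‖N‖ * ‖x‖^2 := by
  have hxi : ∀ i, |x i| ≤ ‖x‖ := fun i => by
    simpa [Real.norm_eq_abs] using norm_le_pi_norm x i
  have hNij : ∀ i j, |N i j| ≤ ‖N‖ := fun i j => by
    simpa [Real.norm_eq_abs] using N.norm_entry_le_entrywise_sup_norm (i := i) (j := j)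
  have hterm : ∀ i j, |x i * (N i j * x j)| ≤ ‖x‖ * (‖N‖ * ‖x‖) := by
    intro i j
    rw [abs_mul, abs_mul]
    have h1 : |N i j| * |x j| ≤ ‖N‖ * ‖x‖ :=
      mul_le_mul (hNij i j) (hxi j) (abs_nonneg _) (le_trans (abs_nonneg _) (hNij i j))
    exact mul_le_mul (hxi i) h1 (mul_nonneg (abs_nonneg _) (abs_nonneg _))
      (norm_nonneg _)
  calc |x ⬝ᵥ N *ᵥ x| = |∑ i, ∑ j, x i * (N i j * x j)| := by
        show |∑ i, x i * ∑ j, N i j * x j| = _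
        simp_rw [Finset.mul_sum]
    _ ≤ ∑ i, ∑ j, |x i * (N i j * x j)| := by
        refine le_trans (Finset.abs_sum_le_sum_abs _ _) ?_
        exact Finset.sum_le_sum fun i _ => Finset.abs_sum_le_sum_abs _ _
    _ ≤ ∑ _i : Fin d, ∑ _j : Fin d, ‖x‖ * (‖N‖ * ‖x‖) :=
        Finset.sum_le_sum fun i _ => Finset.sum_le_sum fun j _ => hterm i j
    _ = (d:ℝ)^2 * ‖N‖ * ‖x‖^2 := by
        simp [Finset.sum_const, Finset.card_univ, nsmul_eq_mul]
        ring

lemma abs_trace_le (D : Matrix (Fin d) (Fin d) ℝ) : |D.trace| ≤ (d:ℝ) * ‖D‖ := by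
  have : ∀ i, |D i i| ≤ ‖D‖ := fun i => by
    simpa [Real.norm_eq_abs] using D.norm_entry_le_entrywise_sup_norm (i := i) (j := i)
  calc |D.trace| ≤ ∑ i, |D i i| := Finset.abs_sum_le_sum_abs _ _
    _ ≤ ∑ _i : Fin d, ‖D‖ := Finset.sum_le_sum fun i _ => this i
    _ = (d:ℝ) * ‖D‖ := by simp [Finset.sum_const, Finset.card_univ, nsmul_eq_mul]

lemma norm_Qm_le (hd : 2 ≤ d) (D : Matrix (Fin d) (Fin d) ℝ) :
    ‖Qm d D‖ ≤ 3 * ‖D‖ := by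
  have hD0 : (0:ℝ) ≤ ‖D‖ := norm_nonneg _
  rw [Matrix.norm_le_iff (by linarith)]
  intro i j
  have hc : |D.trace / ((d:ℝ) - 1)| ≤ 2 * ‖D‖ := by
    rw [abs_div, abs_of_pos (hd1 hd), div_le_iff₀ (hd1 hd)]
    have h1 : |D.trace| ≤ (d:ℝ) * ‖D‖ := abs_trace_le D
    have h2 : (d:ℝ) * ‖D‖ ≤ 2 * ‖D‖ * ((d:ℝ) - 1) := by
      have hd2 : (2:ℝ) ≤ (d:ℝ) := by exact_mod_cast hd
      nlinarith
    linarith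
  have hone : |((1 : Matrix (Fin d) (Fin d) ℝ)) i j| ≤ 1 := by
    by_cases h : i = j <;> simp [Matrix.one_apply, h]
  have hDij : |D i j| ≤ ‖D‖ := by
    simpa [Real.norm_eq_abs] using D.norm_entry_le_entrywise_sup_norm (i := i) (j := j)
  have : ‖Qm d D i j‖ = |D.trace / ((d:ℝ) - 1) * (1 : Matrix (Fin d) (Fin d) ℝ) i j
      - D i j| := by
    rw [Qm, Real.norm_eq_abs]
    rfl
  rw [this]
  calc |D.trace / ((d:ℝ) - 1) * (1 : Matrix (Fin d) (Fin d) ℝ) i j - D i j|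
      ≤ |D.trace / ((d:ℝ) - 1) * (1 : Matrix (Fin d) (Fin d) ℝ) i j| + |D i j| :=
        abs_sub _ _
    _ ≤ 2 * ‖D‖ * 1 + ‖D‖ := by
        refine add_le_add ?_ hDij
        rw [abs_mul]
        exact mul_le_mul hc hone (abs_nonneg _) (by linarith)
    _ = 3 * ‖D‖ := by ring

lemma Qm_add (A B : Matrix (Fin d) (Fin d) ℝ) :
    Qm d (A + B) = Qm d A + Qm d B := by
  rw [Qm, Qm, Qm, Matrix.trace_add, add_div, add_smul, sub_add_sub_comm]

lemma exists_unit_orth (hd : 2 ≤ d) {x : Fin d → ℝ} (hx : x ≠ 0) :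
    ∃ y : Fin d → ℝ, (∑ j, (y j) ^ 2 = 1) ∧ x ⬝ᵥ y = 0 := by
  classical
  set φ : (Fin d → ℝ) →ₗ[ℝ] ℝ :=
    { toFun := fun y => x ⬝ᵥ y
      map_add' := fun a b => dotProduct_add x a b
      map_smul' := fun c a => by simp }
  have hker : LinearMap.ker φ ≠ ⊥ := by
    intro h
    have hinj : Function.Injective φ := LinearMap.ker_eq_bot.mp h
    have h2 := LinearMap.finrank_le_finrank_of_injective hinj
    rw [Module.finrank_self] at h2
    have h3 : Module.finrank ℝ (Fin d → ℝ) = d := by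
      simp [Module.finrank_pi]
    omega
  obtain ⟨z, hz, hz0⟩ := (Submodule.ne_bot_iff _).mp hker
  have hzdot : x ⬝ᵥ z = 0 := hz
  have hzpos : 0 < ∑ j, (z j) ^ 2 := by
    obtain ⟨j0, hj0⟩ := Function.ne_iff.mp hz0
    exact Finset.sum_pos' (fun j _ => sq_nonneg _)
      ⟨j0, Finset.mem_univ j0, pow_two_pos_of_ne_zero hj0⟩
  set s : ℝ := Real.sqrt (∑ j, (z j) ^ 2) with hs
  have hspos : 0 < s := Real.sqrt_pos.mpr hzpos
  refine ⟨s⁻¹ • z, ?_, ?_⟩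
  · simp_rw [Pi.smul_apply, smul_eq_mul, mul_pow, ← Finset.mul_sum]
    rw [hs, ← Real.sqrt_inv]
    rw [Real.sq_sqrt (by positivity)]
    exact inv_mul_cancel₀ hzpos.ne'
  · rw [dotProduct_smul, hzdot, smul_eq_mul, mul_zero]

end MdAux

open MdAux

/-- For `d ≥ 2` and a symmetric positive definite matrix `R`, one has `R ∈ M_d` if and
only if `(tr R/(d−1))·Id − R` is positive definite. -/
theorem mem_Md_iff_trace_posDef (d : ℕ) (hd : 2 ≤ d)
    (R : Matrix (Fin d) (Fin d) ℝ) (hsym : R.IsSymm) (hpos : R.PosDef) :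
    R ∈ Md d ↔ ((R.trace / ((d : ℝ) - 1)) • (1 : Matrix (Fin d) (Fin d) ℝ) - R).PosDef := by
  have hQherm : ∀ (S : Matrix (Fin d) (Fin d) ℝ), S.IsSymm → (Qm d S).IsHermitian := by
    intro S hS
    rw [Matrix.IsHermitian, Matrix.conjTranspose_eq_transpose_of_trivial, Qm,
      Matrix.transpose_sub, Matrix.transpose_smul, Matrix.transpose_one, hS.eq]
  constructor
  · rintro ⟨hsymmR, U, hU, hRU, hcon⟩
    show (Qm d R).PosDef
    refine Matrix.PosDef.of_dotProduct_mulVec_pos (hQherm R hsym) ?_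
    intro x hx
    rw [star_trivial]
    have hpsd : 0 ≤ x ⬝ᵥ (Qm d R) *ᵥ x := conic_Qm hd (hcon R hRU hsym) x
    rcases lt_or_eq_of_le hpsd with h | h
    · exact h
    exfalso
    -- x ⬝ᵥ Qm R x = 0 ; perturb
    obtain ⟨y, hy1, hyx⟩ := exists_unit_orth hd hx
    obtain ⟨ε, hε, hball⟩ := Metric.isOpen_iff.mp hU R hRU
    set t : ℝ := ε / 2 with ht
    have htpos : 0 < t := by positivity
    set V : Matrix (Fin d) (Fin d) ℝ := Matrix.vecMulVec y y with hV
    set M : Matrix (Fin d) (Fin d) ℝ := R - t • V with hM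
    have hMU : M ∈ U := by
      apply hball
      rw [Metric.mem_ball, dist_eq_norm]
      have h1 : M - R = -(t • V) := by rw [hM]; abel
      rw [h1, norm_neg, norm_smul]
      have hVle : ‖V‖ ≤ 1 := by
        rw [Matrix.norm_le_iff zero_le_one]
        intro i j
        rw [hV, Real.norm_eq_abs, Matrix.vecMulVec_apply, abs_mul]
        have hyb : ∀ k, |y k| ≤ 1 := by
          intro k
          have h2 : (y k) ^ 2 ≤ 1 := by
            rw [← hy1]
            exact Finset.single_le_sum (fun j _ => sq_nonneg (y j)) (Finset.mem_univ k)
          nlinarith [abs_nonneg (y k), sq_abs (y k)]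
        exact mul_le_one₀ (hyb i) (abs_nonneg _) (hyb j)
      calc ‖t‖ * ‖V‖ ≤ t * 1 := by
            rw [Real.norm_eq_abs, abs_of_pos htpos]
            exact mul_le_mul_of_nonneg_left hVle htpos.le
        _ < ε := by rw [mul_one, ht]; linarith
    have hMsymm : M.IsSymm := by
      rw [Matrix.IsSymm, hM, Matrix.transpose_sub, Matrix.transpose_smul, hsym.eq]
      congr 1
      congr 1
      ext i j
      rw [Matrix.transpose_apply, hV, Matrix.vecMulVec_apply, Matrix.vecMulVec_apply,
        mul_comm]
    have hMconic := hcon M hMU hMsymm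
    have hquadM := conic_Qm hd hMconic x
    -- compute the quadratic form of Qm d M at x
    have htrV : V.trace = 1 := by rw [hV, trace_vecMulVec, hy1]
    have hquadform : ∀ (N : Matrix (Fin d) (Fin d) ℝ),
        x ⬝ᵥ (Qm d N) *ᵥ x = N.trace / ((d:ℝ) - 1) * (x ⬝ᵥ x) - x ⬝ᵥ N *ᵥ x := by
      intro N
      rw [Qm, Matrix.sub_mulVec, dotProduct_sub, quad_smul_one]
    have hMtr : M.trace = R.trace - t := by
      rw [hM, Matrix.trace_sub, Matrix.trace_smul, htrV, smul_eq_mul, mul_one]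
    have hMx : x ⬝ᵥ M *ᵥ x = x ⬝ᵥ R *ᵥ x := by
      rw [hM, Matrix.sub_mulVec, dotProduct_sub, smul_mulVec, dotProduct_smul,
        quad_vecMulVec, dotProduct_comm y x, hyx]
      simp
    have hxx : 0 < x ⬝ᵥ x := by
      obtain ⟨j0, hj0⟩ := Function.ne_iff.mp hx
      rw [dotProduct]
      exact Finset.sum_pos' (fun j _ => mul_self_nonneg _)
        ⟨j0, Finset.mem_univ j0, mul_self_pos.mpr hj0⟩
    have hRform : x ⬝ᵥ (Qm d R) *ᵥ x
        = R.trace / ((d:ℝ) - 1) * (x ⬝ᵥ x) - x ⬝ᵥ R *ᵥ x := hquadform R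
    have hMform := hquadform M
    rw [hMtr, hMx] at hMform
    have : x ⬝ᵥ (Qm d M) *ᵥ x = x ⬝ᵥ (Qm d R) *ᵥ x - t / ((d:ℝ) - 1) * (x ⬝ᵥ x) := by
      rw [hMform, hRform]
      ring
    rw [this, ← h] at hquadM
    have hneg : 0 < t / ((d:ℝ) - 1) * (x ⬝ᵥ x) := by
      apply mul_pos _ hxx
      exact div_pos htpos (hd1 hd)
    linarith
  · intro hQpos
    have hQpos' : (Qm d R).PosDef := hQpos
    obtain ⟨c, hc, hlow⟩ := posdef_quad_lower (by omega) hQpos'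
    set ε : ℝ := c / (3 * (d:ℝ)^2 + 1) with hε
    have hdpos : (0:ℝ) < 3 * (d:ℝ)^2 + 1 := by positivity
    have hεpos : 0 < ε := div_pos hc hdpos
    refine ⟨hsym, Metric.ball R ε, Metric.isOpen_ball, Metric.mem_ball_self hεpos, ?_⟩
    intro S hS hSsymm
    apply Qm_psd_to_conic hd
    have hD : ‖S - R‖ < ε := by
      rw [← dist_eq_norm]
      exact Metric.mem_ball.mp hS
    have hQS : Qm d S = Qm d R + Qm d (S - R) := by
      rw [← Qm_add]
      have h5 : R + (S - R) = S := by abel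
      rw [h5]
    refine Matrix.PosSemidef.of_dotProduct_mulVec_nonneg (hQherm S hSsymm) ?_
    intro x
    rw [star_trivial]
    rcases eq_or_ne x 0 with rfl | hx
    · simp
    have hxn : 0 < ‖x‖ := norm_pos_iff.mpr hx
    have hquad : x ⬝ᵥ (Qm d S) *ᵥ x
        = x ⬝ᵥ (Qm d R) *ᵥ x + x ⬝ᵥ (Qm d (S - R)) *ᵥ x := by
      rw [hQS, Matrix.add_mulVec, dotProduct_add]
    have hbound : |x ⬝ᵥ (Qm d (S - R)) *ᵥ x| ≤ (d:ℝ)^2 * (3 * ‖S - R‖) * ‖x‖^2 := by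
      refine le_trans (quad_abs_le _ _) ?_
      gcongr
      exact norm_Qm_le hd (S - R)
    have hkey : (d:ℝ)^2 * (3 * ‖S - R‖) * ‖x‖^2 < c * ‖x‖^2 := by
      have h1 : (d:ℝ)^2 * (3 * ‖S - R‖) < c := by
        have h2 : 3 * (d:ℝ)^2 * ε = c * (3 * (d:ℝ)^2) / (3 * (d:ℝ)^2 + 1) := by
          rw [hε]; ring
        have h3 : c * (3 * (d:ℝ)^2) / (3 * (d:ℝ)^2 + 1) < c := by
          rw [div_lt_iff₀ hdpos]
          nlinarith
        have h4 : (d:ℝ)^2 * (3 * ‖S - R‖) < 3 * (d:ℝ)^2 * ε := by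
          have hd2 : (0:ℝ) < (d:ℝ)^2 := by
            have : (0:ℝ) < (d:ℝ) := by exact_mod_cast (by omega : 0 < d)
            positivity
          nlinarith [norm_nonneg (S - R)]
        linarith
      have hx2 : (0:ℝ) < ‖x‖^2 := by positivity
      nlinarith
    have hlow' := hlow x
    have habs := abs_le.mp hbound
    rw [hquad]
    nlinarith
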